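/- Let V be a finite set of unit vectors in ℂⁿ such that for all distinct v,w ∈ V, |⟨v,w⟩| ∈ {0, α} for some fixed real α with 0 < α < 1. Then |V| ≤ n·(n+1)/2·n, i.e., |V| ≤ n·binom(n+1,2). -/

import Mathlib

open Finset
open scoped InnerProductSpace

private lemma tri_sum {n : ℕ} (f g h : Fin n → ℂ) :
    ∑ i, ∑ j, ∑ k, f i * g j * h k = (∑ i, f i) * (∑ j, g j) * (∑ k, h k) := by
  rw [Finset.sum_mul_sum, Finset.sum_mul]
  refine Finset.sum_congr rfl fun i _ => ?_
  rw [Finset.sum_mul]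
  refine Finset.sum_congr rfl fun j _ => ?_
  rw [Finset.mul_sum]

private lemma main_calc {n : ℕ} (α : ℝ) (v w : EuclideanSpace ℂ (Fin n)) :
    ∑ i, ∑ j, ∑ k, ((starRingEnd ℂ) (v i) * (starRingEnd ℂ) (v j) * v k
        - (α:ℂ)^2 * (starRingEnd ℂ) (v i) * (if j = k then 1 else 0))
      * (w i * w j * (starRingEnd ℂ) (w k))
    = ⟪v, w⟫_ℂ * ⟪v, w⟫_ℂ * (starRingEnd ℂ) ⟪v, w⟫_ℂ
      - (α:ℂ)^2 * ⟪v, w⟫_ℂ * ⟪w, w⟫_ℂ := by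
  have hz : ⟪v, w⟫_ℂ = ∑ i, (starRingEnd ℂ) (v i) * w i := by
    rw [PiLp.inner_apply]; exact Finset.sum_congr rfl fun i _ => by simp only [RCLike.inner_apply]; ring
  have hzw : ⟪w, w⟫_ℂ = ∑ i, (starRingEnd ℂ) (w i) * w i := by
    rw [PiLp.inner_apply]; exact Finset.sum_congr rfl fun i _ => by simp only [RCLike.inner_apply]; ring
  simp only [sub_mul, Finset.sum_sub_distrib]
  congr 1
  · rw [hz]
    rw [show (starRingEnd ℂ) (∑ i, (starRingEnd ℂ) (v i) * w i)
        = ∑ k, v k * (starRingEnd ℂ) (w k) by simp]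
    rw [← tri_sum (fun i => (starRingEnd ℂ) (v i) * w i)
        (fun j => (starRingEnd ℂ) (v j) * w j) (fun k => v k * (starRingEnd ℂ) (w k))]
    refine Finset.sum_congr rfl fun i _ => Finset.sum_congr rfl fun j _ =>
      Finset.sum_congr rfl fun k _ => by ring
  · have key : ∀ i j : Fin n, ∑ k, ((α:ℂ)^2 * (starRingEnd ℂ) (v i) * (if j = k then 1 else 0))
        * (w i * w j * (starRingEnd ℂ) (w k))
        = (α:ℂ)^2 * ((starRingEnd ℂ) (v i) * w i) * ((starRingEnd ℂ) (w j) * w j) := by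
      intro i j
      rw [Finset.sum_eq_single j]
      · simp; ring
      · intro k _ hk; simp [Ne.symm hk]
      · intro h; exact absurd (Finset.mem_univ j) h
    simp only [key]
    rw [hz, hzw]
    conv_rhs => rw [mul_assoc, Finset.sum_mul_sum]
    rw [Finset.mul_sum]
    refine Finset.sum_congr rfl fun i _ => ?_
    rw [Finset.mul_sum]
    refine Finset.sum_congr rfl fun j _ => ?_
    ring

theorem stmt_3 {n : ℕ} (α : ℝ) (hα : 0 < α) (hα1 : α < 1)
    (V : Finset (EuclideanSpace ℂ (Fin n)))
    (hunit : ∀ v ∈ V, ‖v‖ = 1)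
    (hangle : ∀ v ∈ V, ∀ w ∈ V, v ≠ w →
      ‖(⟪v, w⟫_ℂ : ℂ)‖ = 0 ∨ ‖(⟪v, w⟫_ℂ : ℂ)‖ = α) :
    V.card ≤ n * Nat.choose (n + 1) 2 := by
  classical
  let S : EuclideanSpace ℂ (Fin n) → (Sym2 (Fin n) × Fin n → ℂ) := fun u p =>
    Sym2.lift ⟨fun i j => u i * u j, fun i j => mul_comm _ _⟩ p.1 * (starRingEnd ℂ) (u p.2)
  have hSmk : ∀ (u : EuclideanSpace ℂ (Fin n)) (i j k : Fin n),
      S u (s(i, j), k) = u i * u j * (starRingEnd ℂ) (u k) := by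
    intro u i j k; simp [S]
  have hne : ((1:ℂ) - (α:ℂ)^2) ≠ 0 := by
    have h1 : (α:ℝ)^2 < 1 := by nlinarith
    intro h
    have h2 : ((1 - α^2 : ℝ) : ℂ) = 0 := by push_cast; linear_combination h
    have := Complex.ofReal_eq_zero.mp h2
    linarith
  have hli : LinearIndependent ℂ (fun v : {x // x ∈ V} => S v) := by
    rw [Fintype.linearIndependent_iff]
    intro g hg w
    set c : Fin n → Fin n → Fin n → ℂ := fun i j k =>
      (starRingEnd ℂ) ((w : EuclideanSpace ℂ (Fin n)) i)
          * (starRingEnd ℂ) ((w : EuclideanSpace ℂ (Fin n)) j)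
          * (w : EuclideanSpace ℂ (Fin n)) k
        - (α:ℂ)^2 * (starRingEnd ℂ) ((w : EuclideanSpace ℂ (Fin n)) i)
          * (if j = k then 1 else 0) with hc
    let L : (Sym2 (Fin n) × Fin n → ℂ) →ₗ[ℂ] ℂ :=
      ∑ i, ∑ j, ∑ k, c i j k •
        (LinearMap.proj (R := ℂ) (φ := fun _ : Sym2 (Fin n) × Fin n => ℂ) (s(i, j), k))
    have hL : ∀ T : Sym2 (Fin n) × Fin n → ℂ,
        L T = ∑ i, ∑ j, ∑ k, c i j k * T (s(i, j), k) := by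
      intro T
      simp [L, LinearMap.sum_apply, smul_eq_mul]
    have hLS : ∀ v : {x // x ∈ V}, L (S (v : EuclideanSpace ℂ (Fin n))) =
        ⟪(w : EuclideanSpace ℂ (Fin n)), (v : EuclideanSpace ℂ (Fin n))⟫_ℂ
            * ⟪(w : EuclideanSpace ℂ (Fin n)), (v : EuclideanSpace ℂ (Fin n))⟫_ℂ
            * (starRingEnd ℂ) ⟪(w : EuclideanSpace ℂ (Fin n)), (v : EuclideanSpace ℂ (Fin n))⟫_ℂ
          - (α:ℂ)^2 * ⟪(w : EuclideanSpace ℂ (Fin n)), (v : EuclideanSpace ℂ (Fin n))⟫_ℂ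
            * ⟪(v : EuclideanSpace ℂ (Fin n)), (v : EuclideanSpace ℂ (Fin n))⟫_ℂ := by
      intro v
      rw [hL, ← main_calc α (w : EuclideanSpace ℂ (Fin n)) (v : EuclideanSpace ℂ (Fin n))]
      refine Finset.sum_congr rfl fun i _ => Finset.sum_congr rfl fun j _ =>
        Finset.sum_congr rfl fun k _ => ?_
      rw [hSmk, hc]
    have h0 : ∑ v : {x // x ∈ V}, g v * L (S (v : EuclideanSpace ℂ (Fin n))) = 0 := by
      have h := congrArg L hg
      rw [map_sum, map_zero] at h
      simpa [smul_eq_mul] using h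
    have hzero : ∀ v : {x // x ∈ V}, v ≠ w →
        g v * L (S (v : EuclideanSpace ℂ (Fin n))) = 0 := by
      intro v hvw
      refine mul_eq_zero_of_right _ ?_
      have hvwE : (w : EuclideanSpace ℂ (Fin n)) ≠ (v : EuclideanSpace ℂ (Fin n)) :=
        fun h => hvw (Subtype.ext h.symm)
      rcases hangle _ w.2 _ v.2 hvwE with h | h
      · have hz0 : ⟪(w : EuclideanSpace ℂ (Fin n)), (v : EuclideanSpace ℂ (Fin n))⟫_ℂ = 0 :=
          norm_eq_zero.mp h
        rw [hLS, hz0]; simp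
      · have hvv : ⟪(v : EuclideanSpace ℂ (Fin n)), (v : EuclideanSpace ℂ (Fin n))⟫_ℂ = 1 := by
          rw [inner_self_eq_norm_sq_to_K, hunit _ v.2]; norm_num
        have hcc : ⟪(w : EuclideanSpace ℂ (Fin n)), (v : EuclideanSpace ℂ (Fin n))⟫_ℂ
            * (starRingEnd ℂ) ⟪(w : EuclideanSpace ℂ (Fin n)), (v : EuclideanSpace ℂ (Fin n))⟫_ℂ
            = ((α:ℂ))^2 := by
          rw [Complex.mul_conj', h]
        rw [hLS, hvv]
        linear_combination ⟪(w : EuclideanSpace ℂ (Fin n)), (v : EuclideanSpace ℂ (Fin n))⟫_ℂ * hcc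
    have hww : ⟪(w : EuclideanSpace ℂ (Fin n)), (w : EuclideanSpace ℂ (Fin n))⟫_ℂ = 1 := by
      rw [inner_self_eq_norm_sq_to_K, hunit _ w.2]; norm_num
    have hsum : ∑ v : {x // x ∈ V}, g v * L (S (v : EuclideanSpace ℂ (Fin n)))
        = g w * (1 - (α:ℂ)^2) := by
      rw [Fintype.sum_eq_single w hzero, hLS, hww]
      rw [map_one]
      ring
    rw [hsum] at h0
    exact (mul_eq_zero.mp h0).resolve_right hne
  have hcard := hli.fintype_card_le_finrank
  rw [Module.finrank_fintype_fun_eq_card] at hcard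
  have h1 : Fintype.card (Sym2 (Fin n) × Fin n) = Nat.choose (n + 1) 2 * n := by
    rw [Fintype.card_prod, Sym2.card, Fintype.card_fin]
  have h2 : Fintype.card {x // x ∈ V} = V.card := Fintype.card_coe V
  rw [h1, h2] at hcard
  exact hcard.trans (le_of_eq (Nat.mul_comm _ _))
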